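/- Let W : ℝⁿ → (0, +∞] be a convex function, and define g(x) = W(x + e) for a fixed vector e ∈ ℝⁿ. Then for every x ∈ ℝⁿ and h ≥ 0, Q_h^W(g)(x) = (1 + h) · W((x + e)/(1 + h)), and the infimum is attained at y = (x + e)/(1 + h). -/

import Mathlib

/-- for `W : ℝⁿ → (0,+∞]` convex and `g(x) = W(x+e)`, one has
`Q_h^W(g)(x) = (1+h)·W((x+e)/(1+h))` with the infimum attained at `y = (x+e)/(1+h)`. -/
theorem Q_of_translate (n : ℕ) (W : EuclideanSpace ℝ (Fin n) → EReal)
    (e : EuclideanSpace ℝ (Fin n))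
    (hW_pos : ∀ x, 0 < W x)
    (hW_conv : ∀ x y : EuclideanSpace ℝ (Fin n), ∀ t : ℝ, 0 ≤ t → t ≤ 1 →
      W ((1 - t) • x + t • y) ≤ (((1 - t) : ℝ) : EReal) * W x + ((t : ℝ) : EReal) * W y) :
    ∀ x : EuclideanSpace ℝ (Fin n), ∀ h : ℝ, 0 ≤ h →
      (⨅ y : EuclideanSpace ℝ (Fin n), W ((x - h • y) + e) + (h : EReal) * W y)
        = (((1 + h) : ℝ) : EReal) * W ((1 + h)⁻¹ • (x + e))
      ∧ (⨅ y : EuclideanSpace ℝ (Fin n), W ((x - h • y) + e) + (h : EReal) * W y)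
        = W ((x - h • ((1 + h)⁻¹ • (x + e))) + e)
            + (h : EReal) * W ((1 + h)⁻¹ • (x + e)) := by
  intro x h hh
  have h1 : (0:ℝ) < 1 + h := by linarith
  set y0 : EuclideanSpace ℝ (Fin n) := (1 + h)⁻¹ • (x + e) with hy0
  have key : (x - h • y0) + e = y0 := by
    rw [hy0]; match_scalars <;> field_simp <;> ring
  have attain : W ((x - h • y0) + e) + (h:EReal) * W y0 = ((1+h : ℝ):EReal) * W y0 := by
    rw [key]
    have hco : ((1+h:ℝ):EReal) = ((1:ℝ):EReal) + ((h:ℝ):EReal) := by norm_cast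
    rw [hco, EReal.right_distrib_of_nonneg (by norm_num) (by exact_mod_cast hh)]
    norm_num
  have lower : ∀ y, ((1+h:ℝ):EReal) * W y0 ≤ W ((x - h • y) + e) + (h:EReal) * W y := by
    intro y
    set t : ℝ := h / (1+h) with ht
    have ht0 : 0 ≤ t := div_nonneg hh h1.le
    have ht1 : t ≤ 1 := by rw [ht, div_le_one h1]; linarith
    have hcomb : (1 - t) • ((x - h • y) + e) + t • y = y0 := by
      rw [hy0, ht]; match_scalars <;> field_simp <;> ring
    have hconv := hW_conv ((x - h • y) + e) y t ht0 ht1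
    rw [hcomb] at hconv
    have hpos : (0:EReal) ≤ ((1+h:ℝ):EReal) := by exact_mod_cast h1.le
    have hmul := mul_le_mul_of_nonneg_left hconv hpos
    refine le_trans hmul (le_of_eq ?_)
    have hWa : (0:EReal) ≤ (((1-t):ℝ):EReal) * W ((x - h • y) + e) :=
      mul_nonneg (by exact_mod_cast (by linarith : (0:ℝ) ≤ 1 - t)) (hW_pos _).le
    have hWb : (0:EReal) ≤ ((t:ℝ):EReal) * W y :=
      mul_nonneg (by exact_mod_cast ht0) (hW_pos _).le
    rw [EReal.left_distrib_of_nonneg hWa hWb, ← mul_assoc, ← mul_assoc,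
      ← EReal.coe_mul, ← EReal.coe_mul]
    have e1 : (1+h) * (1-t) = 1 := by rw [ht]; field_simp; ring
    have e2 : (1+h) * t = h := by rw [ht]; field_simp
    rw [e1, e2]
    norm_num
  have hinf : (⨅ y : EuclideanSpace ℝ (Fin n), W ((x - h • y) + e) + (h : EReal) * W y)
      = ((1+h:ℝ):EReal) * W y0 :=
    le_antisymm (iInf_le_of_le y0 attain.le) (le_iInf lower)
  exact ⟨hinf, hinf.trans attain.symm⟩
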